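/- arXiv:1708.04507 — 3 statements merged into one kernel-verified Lean document; each statement's English description precedes it below -/
import Mathlib

section
/- For all positive integers r and s: Σ_{n=1}^{r^s} (c_{r,s}(n))² = r^s · J_s(r^s), where J_s(r^s) = r^s ∏_{p | r}(1 − p^{−s}). -/
open Finset

/-- The generalized gcd `(a,b)_s`: the largest `s`-th power dividing both `a` and `b`. -/
noncomputable def ggcd (s a b : ℕ) : ℕ :=
  sSup {m : ℕ | (∃ l : ℕ, m = l ^ s) ∧ m ∣ a ∧ m ∣ b}

/-- The generalized Ramanujan sum `c_{r,s}(n)`. -/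
noncomputable def crs (s r n : ℕ) : ℂ :=
  ∑ j ∈ Finset.Icc 1 (r ^ s),
    if ggcd s j (r ^ s) = 1 then Complex.exp (2 * Real.pi * Complex.I * n * j / (r ^ s)) else 0

/-- The discrete Fourier transform of an `r^s`-periodic function. -/
noncomputable def dft (s r : ℕ) (f : ℕ → ℂ) (n : ℕ) : ℂ :=
  ∑ k ∈ Finset.Icc 1 (r ^ s), f k * Complex.exp (-(2 * Real.pi * Complex.I * k * n / (r ^ s)))

/-- A function is `(r,s)`-even if `f(n) = f((n, r^s)_s)` for all `n`. -/
def IsRSEven (s r : ℕ) (f : ℕ → ℂ) : Prop := ∀ n, f n = f (ggcd s n (r ^ s))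

/-- `J_s(r^s)`: the number of `j` with `1 ≤ j ≤ r^s` and `(j,r^s)_s = 1`. -/
noncomputable def jcount (s m : ℕ) : ℕ :=
  Nat.card {n : ℕ // 1 ≤ n ∧ n ≤ m ∧ ggcd s n m = 1}

private lemma sum_exp (m k : ℕ) (hm : 0 < m) :
    ∑ n ∈ Finset.Icc 1 m, Complex.exp (2 * Real.pi * Complex.I * n * k / m) =
      if m ∣ k then (m : ℂ) else 0 := by
  have hm0 : (m : ℂ) ≠ 0 := Nat.cast_ne_zero.2 hm.ne'
  set z : ℂ := Complex.exp (2 * Real.pi * Complex.I * k / m) with hz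
  have hterm : ∀ n : ℕ, Complex.exp (2 * Real.pi * Complex.I * n * k / m) = z ^ n := by
    intro n
    rw [hz, ← Complex.exp_nat_mul]
    congr 1
    ring
  have hzm : z ^ m = 1 := by
    rw [hz, ← Complex.exp_nat_mul]
    have h1 : (m : ℂ) * (2 * Real.pi * Complex.I * k / m) = (k : ℤ) * (2 * Real.pi * Complex.I) := by
      push_cast
      field_simp
    rw [h1, Complex.exp_int_mul_two_pi_mul_I]
  simp only [hterm]
  by_cases hd : m ∣ k
  · obtain ⟨c, rfl⟩ := hd
    have hz1 : z = 1 := by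
      rw [hz]
      have h1 : 2 * Real.pi * Complex.I * (↑(m * c)) / m = (c : ℤ) * (2 * Real.pi * Complex.I) := by
        push_cast
        field_simp
      rw [h1, Complex.exp_int_mul_two_pi_mul_I]
    rw [if_pos (dvd_mul_right m c)]
    simp [hz1, Nat.card_Icc]
  · have hπ : (2 : ℂ) * Real.pi * Complex.I ≠ 0 := by
      refine mul_ne_zero (mul_ne_zero two_ne_zero ?_) Complex.I_ne_zero
      exact_mod_cast Complex.ofReal_ne_zero.2 Real.pi_ne_zero
    have hz1 : z ≠ 1 := by
      intro h
      rw [hz, Complex.exp_eq_one_iff] at h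
      obtain ⟨t, ht⟩ := h
      apply hd
      have key : (2 * (Real.pi : ℂ) * Complex.I) * k = (2 * (Real.pi : ℂ) * Complex.I) * (t * m) := by
        field_simp at ht
        linear_combination (2 * (Real.pi : ℂ) * Complex.I) * ht
      have h2 : (k : ℂ) = (t * m : ℤ) := by
        push_cast
        exact mul_left_cancel₀ hπ key
      have h3 : (k : ℤ) = t * m := by exact_mod_cast h2
      exact Int.natCast_dvd_natCast.mp ⟨t, by rw [h3]; ring⟩
    rw [if_neg hd]
    rw [← Finset.Ico_add_one_right_eq_Icc, Finset.sum_Ico_eq_sum_range]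
    norm_num
    have : ∀ i ∈ Finset.range m, z ^ (1 + i) = z * z ^ i := by
      intro i _
      rw [pow_add, pow_one]
    rw [Finset.sum_congr rfl this, ← Finset.mul_sum, geom_sum_eq hz1, hzm]
    simp

private lemma ggcd_congr (s m a b : ℕ) (h : ∀ d : ℕ, d ∣ m → (d ∣ a ↔ d ∣ b)) :
    ggcd s a m = ggcd s b m := by
  unfold ggcd
  congr 1
  ext x
  simp only [Set.mem_setOf_eq]
  constructor <;> rintro ⟨h1, h2, h3⟩
  · exact ⟨h1, (h x h3).mp h2, h3⟩
  · exact ⟨h1, (h x h3).mpr h2, h3⟩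

private lemma jcount_eq (s m : ℕ) :
    jcount s m = ((Finset.Icc 1 m).filter fun n => ggcd s n m = 1).card := by
  rw [jcount, Nat.card_congr (Equiv.subtypeEquivRight (q := fun n =>
      n ∈ (Finset.Icc 1 m).filter fun n => ggcd s n m = 1) (by
    intro n
    simp [Finset.mem_filter, Finset.mem_Icc, and_assoc]))]
  rw [Nat.card_eq_fintype_card, Fintype.card_coe]

theorem stmt14 (s r : ℕ) (hs : 0 < s) (hr : 0 < r) :
    ∑ n ∈ Finset.Icc 1 (r ^ s), (crs s r n) ^ 2 =
      (r : ℂ) ^ s * (jcount s (r ^ s) : ℂ) := by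
  have hm : 0 < r ^ s := pow_pos hr s
  have hrs : ((r : ℂ)) ^ s = ((r ^ s : ℕ) : ℂ) := by push_cast; ring
  set M := r ^ s with hM
  -- inner sum over n
  have inner : ∀ j ∈ Finset.Icc 1 M, ∀ k ∈ Finset.Icc 1 M,
      ∑ n ∈ Finset.Icc 1 M,
        ((if ggcd s j M = 1 then Complex.exp (2 * Real.pi * Complex.I * n * j / (M : ℂ)) else 0) *
         (if ggcd s k M = 1 then Complex.exp (2 * Real.pi * Complex.I * n * k / (M : ℂ)) else 0))
      = if ggcd s j M = 1 ∧ ggcd s k M = 1 then (if M ∣ j + k then (M : ℂ) else 0) else 0 := by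
    intro j _ k _
    by_cases hj : ggcd s j M = 1
    · by_cases hk : ggcd s k M = 1
      · rw [if_pos ⟨hj, hk⟩]
        simp only [if_pos hj, if_pos hk]
        have hstep : ∀ n ∈ Finset.Icc 1 M,
            Complex.exp (2 * Real.pi * Complex.I * n * j / (M : ℂ)) *
              Complex.exp (2 * Real.pi * Complex.I * n * k / (M : ℂ)) =
            Complex.exp (2 * Real.pi * Complex.I * n * (↑(j + k)) / (M : ℂ)) := by
          intro n _
          rw [← Complex.exp_add]
          congr 1
          push_cast
          ring
        rw [Finset.sum_congr rfl hstep, sum_exp M (j + k) hm]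
      · simp [hj, hk]
    · simp [hj]
  -- sum over k via the unique pairing
  have pairing : ∀ j ∈ Finset.Icc 1 M,
      ∑ k ∈ Finset.Icc 1 M,
        (if ggcd s j M = 1 ∧ ggcd s k M = 1 then (if M ∣ j + k then (M : ℂ) else 0) else 0)
      = if ggcd s j M = 1 then (M : ℂ) else 0 := by
    intro j hj
    obtain ⟨hj1, hj2⟩ := Finset.mem_Icc.mp hj
    have hkey : ∀ k ∈ Finset.Icc 1 M,
        (if ggcd s j M = 1 ∧ ggcd s k M = 1 then (if M ∣ j + k then (M : ℂ) else 0) else 0)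
        = if M ∣ j + k then (if ggcd s j M = 1 then (M : ℂ) else 0) else 0 := by
      intro k _
      by_cases hd : M ∣ j + k
      · have hiff : ggcd s k M = ggcd s j M := by
          refine ggcd_congr s M k j fun d hdM => ?_
          have hdsum : d ∣ j + k := hdM.trans hd
          constructor
          · intro h
            have := Nat.dvd_sub hdsum h
            simpa [Nat.add_sub_cancel] using this
          · intro h
            have := Nat.dvd_sub hdsum h
            have h2 : j + k - j = k := by omega
            rwa [h2] at this
        simp only [if_pos hd]
        by_cases hcj : ggcd s j M = 1
        · rw [if_pos hcj, if_pos ⟨hcj, hiff.trans hcj⟩]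
        · rw [if_neg hcj, if_neg fun h => hcj h.1]
      · simp [hd]
    rw [Finset.sum_congr rfl hkey, ← Finset.sum_filter]
    have hfilter : (Finset.Icc 1 M).filter (fun k => M ∣ j + k)
        = {if j = M then M else M - j} := by
      ext k
      simp only [Finset.mem_filter, Finset.mem_Icc, Finset.mem_singleton]
      constructor
      · rintro ⟨⟨hk1, hk2⟩, c, hc⟩
        have hc0 : c ≠ 0 := by rintro rfl; omega
        have h1 : M * c ≤ M * 2 := le_trans (le_of_eq hc.symm) (by omega)
        have hc2 : c ≤ 2 := Nat.le_of_mul_le_mul_left h1 hm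
        interval_cases c <;> split_ifs <;> omega
      · intro hk
        split_ifs at hk with h
        · subst hk
          exact ⟨⟨hm, le_refl M⟩, ⟨2, by omega⟩⟩
        · subst hk
          refine ⟨⟨by omega, by omega⟩, ⟨1, ?_⟩⟩
          have : j < M := lt_of_le_of_ne hj2 h
          omega
    rw [hfilter, Finset.sum_const, Finset.card_singleton, one_smul]
  -- assemble
  calc ∑ n ∈ Finset.Icc 1 M, (crs s r n) ^ 2
      = ∑ n ∈ Finset.Icc 1 M, ∑ j ∈ Finset.Icc 1 M, ∑ k ∈ Finset.Icc 1 M,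
          ((if ggcd s j M = 1 then Complex.exp (2 * Real.pi * Complex.I * n * j / (M : ℂ)) else 0) *
           (if ggcd s k M = 1 then Complex.exp (2 * Real.pi * Complex.I * n * k / (M : ℂ)) else 0)) := by
        refine Finset.sum_congr rfl fun n _ => ?_
        rw [sq, crs, ← hM, hrs, Finset.sum_mul_sum]
    _ = ∑ j ∈ Finset.Icc 1 M, ∑ k ∈ Finset.Icc 1 M, ∑ n ∈ Finset.Icc 1 M,
          ((if ggcd s j M = 1 then Complex.exp (2 * Real.pi * Complex.I * n * j / (M : ℂ)) else 0) *
           (if ggcd s k M = 1 then Complex.exp (2 * Real.pi * Complex.I * n * k / (M : ℂ)) else 0)) := by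
        rw [Finset.sum_comm]
        exact Finset.sum_congr rfl fun j _ => Finset.sum_comm
    _ = ∑ j ∈ Finset.Icc 1 M, ∑ k ∈ Finset.Icc 1 M,
          (if ggcd s j M = 1 ∧ ggcd s k M = 1 then (if M ∣ j + k then (M : ℂ) else 0) else 0) := by
        refine Finset.sum_congr rfl fun j hjmem => Finset.sum_congr rfl fun k hkmem => ?_
        exact inner j hjmem k hkmem
    _ = ∑ j ∈ Finset.Icc 1 M, (if ggcd s j M = 1 then (M : ℂ) else 0) :=
        Finset.sum_congr rfl pairing
    _ = (r : ℂ) ^ s * (jcount s M : ℂ) := by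
        rw [← Finset.sum_filter, Finset.sum_const, nsmul_eq_mul, jcount_eq, hrs, mul_comm]
end

section
/- Let (f_r)_{r≥1} be a family of functions with each f_r (r,s)-even and r ↦ f_r(n) multiplicative for each fixed n (i.e., f_{qr}(n) = f_q(n) f_r(n) when gcd(q,r) = 1). Then f(n,r) := f_r(n) is multiplicative as a function of two variables: f(n₁n₂, r₁r₂) = f(n₁,r₁) f(n₂,r₂) whenever gcd(n₁r₁, n₂r₂) = 1. -/
open Finset

lemma ggcd_mul_right (s a b r : ℕ) (h : Nat.Coprime b r) :
    ggcd s (a * b) (r ^ s) = ggcd s a (r ^ s) := by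
  unfold ggcd
  congr 1
  ext m
  simp only [Set.mem_setOf_eq]
  constructor
  · rintro ⟨hl, hab, hr⟩
    refine ⟨hl, ?_, hr⟩
    have hcop : Nat.Coprime m b := ((h.pow_right s).coprime_dvd_right hr).symm
    exact (Nat.Coprime.dvd_of_dvd_mul_right hcop hab)
  · rintro ⟨hl, ha, hr⟩
    exact ⟨hl, ha.mul_right b, hr⟩

lemma ggcd_mul_left (s a b r : ℕ) (h : Nat.Coprime a r) :
    ggcd s (a * b) (r ^ s) = ggcd s b (r ^ s) := by
  rw [mul_comm]; exact ggcd_mul_right s b a r h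

theorem stmt15 (s : ℕ) (hs : 0 < s) (f : ℕ → ℕ → ℂ)
    (heven : ∀ r : ℕ, 0 < r → IsRSEven s r (f r))
    (hmult : ∀ q r n : ℕ, 0 < q → 0 < r → Nat.Coprime q r → f (q * r) n = f q n * f r n) :
    ∀ n₁ n₂ r₁ r₂ : ℕ, 0 < n₁ → 0 < n₂ → 0 < r₁ → 0 < r₂ →
      Nat.Coprime (n₁ * r₁) (n₂ * r₂) →
      f (r₁ * r₂) (n₁ * n₂) = f r₁ n₁ * f r₂ n₂ := by
  intro n₁ n₂ r₁ r₂ hn₁ hn₂ hr₁ hr₂ hcop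
  have hr12 : Nat.Coprime r₁ r₂ := Nat.Coprime.coprime_dvd_left (dvd_mul_left r₁ n₁)
    (Nat.Coprime.coprime_dvd_right (dvd_mul_left r₂ n₂) hcop)
  have hn2r1 : Nat.Coprime n₂ r₁ :=
    (Nat.Coprime.coprime_dvd_left (dvd_mul_left r₁ n₁)
      (Nat.Coprime.coprime_dvd_right (dvd_mul_right n₂ r₂) hcop)).symm
  have hn1r2 : Nat.Coprime n₁ r₂ :=
    Nat.Coprime.coprime_dvd_left (dvd_mul_right n₁ r₁)
      (Nat.Coprime.coprime_dvd_right (dvd_mul_left r₂ n₂) hcop)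
  rw [hmult r₁ r₂ (n₁ * n₂) hr₁ hr₂ hr12]
  have e1 : f r₁ (n₁ * n₂) = f r₁ n₁ := by
    rw [heven r₁ hr₁ (n₁ * n₂), ggcd_mul_right s n₁ n₂ r₁ hn2r1, ← heven r₁ hr₁ n₁]
  have e2 : f r₂ (n₁ * n₂) = f r₂ n₂ := by
    rw [heven r₂ hr₂ (n₁ * n₂), ggcd_mul_left s n₁ n₂ r₂ hn1r2, ← heven r₂ hr₂ n₂]
  rw [e1, e2]
end

section
/- Generalized Hölder identity: let F be a strongly multiplicative arithmetic function (F(p^a) = F(p) for all primes p, a ≥ 1) with F(p) ≠ 1 − p^s for every prime p. Define f_r(n) = F((n,r^s)_s). Then the DFT satisfies f̂_r(n) = (F∗μ)(m) · (F∗J_s)(r) / (F∗J_s)(m), where m^s = r^s/(n,r^s)_s, ∗ is Dirichlet convolution, μ the Möbius function, and J_s the Jordan totient. -/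
open Finset

/-- Dirichlet convolution of two complex-valued arithmetic functions. -/
noncomputable def dirconv (F G : ℕ → ℂ) (n : ℕ) : ℂ := ∑ d ∈ n.divisors, F d * G (n / d)

/-- The Jordan totient `J_s(n) = n^s ∏_{p ∣ n} (1 - p^{-s})`, as a complex number. -/
noncomputable def Js (s n : ℕ) : ℂ :=
  (n : ℂ) ^ s * ∏ p ∈ n.primeFactors, (1 - (p : ℂ) ^ (-(s : ℤ)))


open ArithmeticFunction

namespace Stmt19Aux


lemma nat_lcm_pow (a b k : ℕ) : Nat.lcm (a ^ k) (b ^ k) = Nat.lcm a b ^ k := by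
  rcases Nat.eq_zero_or_pos k with rfl | hk
  · simp [Nat.lcm]
  rcases eq_or_ne a 0 with rfl | ha
  · simp [Nat.lcm, zero_pow hk.ne']
  rcases eq_or_ne b 0 with rfl | hb
  · simp [Nat.lcm, zero_pow hk.ne']
  refine Nat.eq_of_factorization_eq (Nat.lcm_ne_zero (pow_ne_zero _ ha) (pow_ne_zero _ hb))
    (pow_ne_zero _ (Nat.lcm_ne_zero ha hb)) fun p => ?_
  rw [Nat.factorization_lcm (pow_ne_zero _ ha) (pow_ne_zero _ hb),
    Nat.factorization_pow, Nat.factorization_pow, Nat.factorization_pow,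
    Nat.factorization_lcm ha hb]
  simp only [Finsupp.sup_apply, Finsupp.smul_apply, smul_eq_mul]
  rcases le_total (a.factorization p) (b.factorization p) with h | h <;>
    simp [sup_of_le_left, sup_of_le_right, Nat.mul_le_mul_right, Nat.max_eq_left, Nat.max_eq_right, h, Nat.mul_le_mul_left, *]

/-- The largest divisor `d` of `r` with `d ^ s ∣ n`. -/
noncomputable def aa (s n r : ℕ) : ℕ :=
  if h : r = 0 then 0 else
    (r.divisors.filter fun e => e ^ s ∣ n).max' ⟨1, by
      simp [Nat.mem_divisors, h, Nat.one_dvd]⟩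

variable {s n r : ℕ}

lemma aa_mem (hr : r ≠ 0) : aa s n r ∈ r.divisors.filter fun e => e ^ s ∣ n := by
  rw [aa, dif_neg hr]; exact Finset.max'_mem _ _

lemma aa_dvd (hr : r ≠ 0) : aa s n r ∣ r := (Nat.mem_divisors.1 (Finset.mem_filter.1 (aa_mem hr)).1).1

lemma aa_pow_dvd (hr : r ≠ 0) : aa s n r ^ s ∣ n := (Finset.mem_filter.1 (aa_mem hr)).2

lemma aa_pos (hr : r ≠ 0) : 0 < aa s n r :=
  Nat.pos_of_dvd_of_pos (aa_dvd hr) (Nat.pos_of_ne_zero hr)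

lemma le_aa (hr : r ≠ 0) {e : ℕ} (he : e ∣ r) (hen : e ^ s ∣ n) : e ≤ aa s n r := by
  rw [aa, dif_neg hr]
  exact Finset.le_max' _ e (by simp [Finset.mem_filter, Nat.mem_divisors, hr, he, hen])

lemma dvd_aa (hr : r ≠ 0) {e : ℕ} (he : e ∣ r) (hen : e ^ s ∣ n) : e ∣ aa s n r := by
  have hL : Nat.lcm e (aa s n r) ∣ r := Nat.lcm_dvd he (aa_dvd hr)
  have hLn : Nat.lcm e (aa s n r) ^ s ∣ n := by
    rw [← nat_lcm_pow]; exact Nat.lcm_dvd hen (aa_pow_dvd hr)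
  have h1 : Nat.lcm e (aa s n r) ≤ aa s n r := le_aa hr hL hLn
  have h2 : aa s n r ∣ Nat.lcm e (aa s n r) := Nat.dvd_lcm_right _ _
  have hLpos : 0 < Nat.lcm e (aa s n r) := Nat.pos_of_dvd_of_pos hL (Nat.pos_of_ne_zero hr)
  have : Nat.lcm e (aa s n r) = aa s n r := le_antisymm h1 (Nat.le_of_dvd hLpos h2)
  rw [← this]; exact Nat.dvd_lcm_left _ _

lemma dvd_aa_iff (hr : r ≠ 0) {e : ℕ} : e ∣ aa s n r ↔ e ∣ r ∧ e ^ s ∣ n :=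
  ⟨fun h => ⟨h.trans (aa_dvd hr), (pow_dvd_pow_of_dvd h s).trans (aa_pow_dvd hr)⟩,
   fun ⟨h1, h2⟩ => dvd_aa hr h1 h2⟩

lemma ggcd_eq_aa_pow (hs : s ≠ 0) (hr : r ≠ 0) : ggcd s n (r ^ s) = aa s n r ^ s := by
  have : IsGreatest {m : ℕ | (∃ l : ℕ, m = l ^ s) ∧ m ∣ n ∧ m ∣ r ^ s} (aa s n r ^ s) := by
    constructor
    · exact ⟨⟨aa s n r, rfl⟩, aa_pow_dvd hr, pow_dvd_pow_of_dvd (aa_dvd hr) s⟩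
    · rintro m ⟨⟨l, rfl⟩, hln, hlr⟩
      exact Nat.pow_le_pow_left (le_aa hr ((Nat.pow_dvd_pow_iff hs).1 hlr) hln) s
  exact this.csSup_eq

lemma aa_mul (hs : s ≠ 0) {r₁ r₂ : ℕ} (h₁ : r₁ ≠ 0) (h₂ : r₂ ≠ 0) (hco : Nat.Coprime r₁ r₂) :
    aa s n (r₁ * r₂) = aa s n r₁ * aa s n r₂ := by
  have h12 : r₁ * r₂ ≠ 0 := mul_ne_zero h₁ h₂
  have hcoaa : Nat.Coprime (aa s n r₁) (aa s n r₂) :=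
    Nat.Coprime.coprime_dvd_left (aa_dvd h₁) (Nat.Coprime.coprime_dvd_right (aa_dvd h₂) hco)
  apply Nat.dvd_antisymm
  · set e := aa s n (r₁ * r₂) with he
    have h1 : Nat.gcd e r₁ ∣ aa s n r₁ :=
      dvd_aa h₁ (Nat.gcd_dvd_right _ _)
        ((pow_dvd_pow_of_dvd (Nat.gcd_dvd_left _ _) s).trans (aa_pow_dvd h12))
    have h2 : Nat.gcd e r₂ ∣ aa s n r₂ :=
      dvd_aa h₂ (Nat.gcd_dvd_right _ _)
        ((pow_dvd_pow_of_dvd (Nat.gcd_dvd_left _ _) s).trans (aa_pow_dvd h12))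
    have : Nat.gcd e r₁ * Nat.gcd e r₂ = e :=
      (Nat.gcd_mul_gcd_eq_iff_dvd_mul_of_coprime hco).2 (aa_dvd h12)
    exact this ▸ mul_dvd_mul h1 h2
  · refine dvd_aa h12 (mul_dvd_mul (aa_dvd h₁) (aa_dvd h₂)) ?_
    rw [mul_pow]
    exact Nat.Coprime.mul_dvd_of_dvd_of_dvd (Nat.Coprime.pow s s hcoaa) (aa_pow_dvd h₁) (aa_pow_dvd h₂)



/-- `F` as an arithmetic function. -/
noncomputable def FA (F : ℕ → ℂ) : ArithmeticFunction ℂ :=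
  ⟨fun k => if k = 0 then 0 else F k, by simp⟩

lemma FA_apply (F : ℕ → ℂ) {k : ℕ} (hk : k ≠ 0) : FA F k = F k := if_neg hk

lemma FA_mult {F : ℕ → ℂ} (hF1 : F 1 = 1)
    (hFmult : ∀ a b : ℕ, Nat.Coprime a b → F (a * b) = F a * F b) :
    (FA F).IsMultiplicative := by
  refine ⟨by simp [FA, hF1], fun {a b} hab => ?_⟩
  rcases eq_or_ne a 0 with rfl | ha
  · obtain rfl : b = 1 := Nat.coprime_zero_left b |>.1 hab
    simp [FA]
  rcases eq_or_ne b 0 with rfl | hb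
  · obtain rfl : a = 1 := Nat.coprime_zero_right a |>.1 hab
    simp [FA]
  rw [FA_apply F (mul_ne_zero ha hb), FA_apply F ha, FA_apply F hb, hFmult a b hab]

/-- `F * μ` -/
noncomputable def gA (F : ℕ → ℂ) : ArithmeticFunction ℂ :=
  FA F * (ArithmeticFunction.moebius : ArithmeticFunction ℤ)

lemma gA_mult {F : ℕ → ℂ} (hF1 : F 1 = 1)
    (hFmult : ∀ a b : ℕ, Nat.Coprime a b → F (a * b) = F a * F b) :
    (gA F).IsMultiplicative :=
  (FA_mult hF1 hFmult).mul isMultiplicative_moebius.intCast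

lemma pp_apply (f g : ArithmeticFunction ℂ) {p : ℕ} (hp : p.Prime) (k : ℕ) :
    (f * g) (p ^ k) = ∑ i ∈ range (k + 1), f (p ^ i) * g (p ^ (k - i)) := by
  rw [mul_apply, Nat.sum_divisorsAntidiagonal (f := fun x y => f x * g y),
    Nat.sum_divisors_prime_pow hp]
  refine Finset.sum_congr rfl fun i hi => ?_
  rw [Nat.pow_div (by simpa using Nat.lt_succ_iff.1 (mem_range.1 hi)) hp.pos]

lemma gA_prime {F : ℕ → ℂ} (hF1 : F 1 = 1) {p : ℕ} (hp : p.Prime) :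
    gA F p = F p - 1 := by
  rw [gA, ← pow_one p, pp_apply _ _ hp 1]
  simp [FA_apply, hp.ne_zero, sum_range_succ, moebius_apply_prime hp, hF1]
  ring

lemma gA_prime_pow_eq_zero {F : ℕ → ℂ}
    (hFstrong : ∀ p a : ℕ, p.Prime → 1 ≤ a → F (p ^ a) = F p)
    {p k : ℕ} (hp : p.Prime) (hk : 2 ≤ k) : gA F (p ^ k) = 0 := by
  rw [gA, pp_apply _ _ hp]
  have hk1 : k + 1 = (k - 1) + 1 + 1 := by omega
  rw [hk1, sum_range_succ, sum_range_succ]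
  have h0 : ∑ i ∈ range (k - 1),
      FA F (p ^ i) * (↑(moebius : ArithmeticFunction ℤ) : ArithmeticFunction ℂ) (p ^ (k - i)) = 0 := by
    refine Finset.sum_eq_zero fun i hi => ?_
    rw [mem_range] at hi
    rw [intCoe_apply, moebius_apply_prime_pow hp (by omega), if_neg (by omega)]
    simp
  have e1 : k - (k - 1) = 1 := by omega
  have e2 : k - ((k - 1) + 1) = 0 := by omega
  rw [h0, e1, e2]
  rw [FA_apply F (pow_ne_zero _ hp.ne_zero), FA_apply F (pow_ne_zero _ hp.ne_zero),
    hFstrong p (k - 1) hp (by omega), show (k-1)+1 = k by omega, hFstrong p k hp (by omega)]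
  simp [intCoe_apply, moebius_apply_prime hp]






noncomputable def JA (s : ℕ) : ArithmeticFunction ℂ :=
  ⟨fun k => if k = 0 then 0 else Js s k, by simp⟩

lemma JA_apply {s k : ℕ} (hk : k ≠ 0) : JA s k = Js s k := if_neg hk

lemma JA_one (s : ℕ) : JA s 1 = 1 := by simp [JA_apply, Js]

lemma JA_prime_pow {s p k : ℕ} (hp : p.Prime) (hk : 1 ≤ k) :
    JA s (p ^ k) = (p : ℂ) ^ (k * s) - (p : ℂ) ^ ((k - 1) * s) := by
  obtain ⟨k', rfl⟩ : ∃ k', k = k' + 1 := ⟨k - 1, by omega⟩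
  have hp0 : (p : ℂ) ≠ 0 := Nat.cast_ne_zero.2 hp.ne_zero
  rw [JA_apply (pow_ne_zero _ hp.ne_zero), Js, Nat.primeFactors_prime_pow (by omega) hp,
    Finset.prod_singleton]
  have hz : (p : ℂ) ^ (-(s : ℤ)) = ((p : ℂ) ^ s)⁻¹ := by rw [zpow_neg, zpow_natCast]
  rw [hz]
  push_cast
  rw [← pow_mul]
  rw [add_mul, one_mul, pow_add]
  field_simp

lemma JA_mult (s : ℕ) : (JA s).IsMultiplicative := by
  refine ⟨JA_one s, fun {a b} hab => ?_⟩
  rcases eq_or_ne a 0 with rfl | ha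
  · obtain rfl : b = 1 := Nat.coprime_zero_left b |>.1 hab
    simp [JA]
  rcases eq_or_ne b 0 with rfl | hb
  · obtain rfl : a = 1 := Nat.coprime_zero_right a |>.1 hab
    simp [JA]
  rw [JA_apply (mul_ne_zero ha hb), JA_apply ha, JA_apply hb, Js, Js, Js,
    hab.primeFactors_mul, Finset.prod_union hab.disjoint_primeFactors]
  push_cast
  ring

noncomputable def HA (s : ℕ) (F : ℕ → ℂ) : ArithmeticFunction ℂ := FA F * JA s

lemma HA_mult {s : ℕ} {F : ℕ → ℂ} (hF1 : F 1 = 1)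
    (hFmult : ∀ a b : ℕ, Nat.Coprime a b → F (a * b) = F a * F b) :
    (HA s F).IsMultiplicative :=
  (FA_mult hF1 hFmult).mul (JA_mult s)

lemma sum_JA {s p : ℕ} (hp : p.Prime) (k : ℕ) :
    ∑ j ∈ range (k + 1), JA s (p ^ j) = (p : ℂ) ^ (k * s) := by
  induction k with
  | zero => simp [JA_one]
  | succ k ih =>
    rw [sum_range_succ, ih, JA_prime_pow hp (by omega)]
    simp only [Nat.add_sub_cancel]
    ring

lemma HA_prime_pow {s : ℕ} {F : ℕ → ℂ} (hF1 : F 1 = 1)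
    (hFstrong : ∀ p a : ℕ, p.Prime → 1 ≤ a → F (p ^ a) = F p)
    {p k : ℕ} (hp : p.Prime) (hk : 1 ≤ k) :
    HA s F (p ^ k) = (p : ℂ) ^ ((k - 1) * s) * ((p : ℂ) ^ s - 1 + F p) := by
  obtain ⟨k', rfl⟩ : ∃ k', k = k' + 1 := ⟨k - 1, by omega⟩
  rw [HA, pp_apply _ _ hp, sum_range_succ']
  have h0 : FA F (p ^ 0) * JA s (p ^ (k' + 1 - 0)) = JA s (p ^ (k' + 1)) := by
    simp [FA, hF1]
  have h1 : ∀ i ∈ range (k' + 1), FA F (p ^ (i + 1)) * JA s (p ^ (k' + 1 - (i + 1)))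
      = F p * JA s (p ^ (k' - i)) := by
    intro i hi
    rw [FA_apply F (pow_ne_zero _ hp.ne_zero), hFstrong p (i + 1) hp (by omega)]
    have he : k' + 1 - (i + 1) = k' - i := by omega
    rw [he]
  rw [h0, Finset.sum_congr rfl h1, ← Finset.mul_sum]
  have h2 : ∑ i ∈ range (k' + 1), JA s (p ^ (k' - i)) = (p : ℂ) ^ (k' * s) := by
    rw [← sum_JA hp k']
    exact Finset.sum_nbij' (fun i => k' - i) (fun i => k' - i)
      (fun i hi => by simp at hi ⊢) (fun i hi => by simp at hi ⊢)
      (fun i hi => by simp at hi ⊢; omega) (fun i hi => by simp at hi ⊢; omega)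
      (fun i hi => rfl)
  rw [h2, JA_prime_pow hp (by omega)]
  simp only [Nat.add_sub_cancel]
  rw [add_mul, one_mul, pow_add]
  ring

lemma HA_ne_zero {s : ℕ} {F : ℕ → ℂ} (hs : s ≠ 0) (hF1 : F 1 = 1)
    (hFmult : ∀ a b : ℕ, Nat.Coprime a b → F (a * b) = F a * F b)
    (hFstrong : ∀ p a : ℕ, p.Prime → 1 ≤ a → F (p ^ a) = F p)
    (hFp : ∀ p : ℕ, p.Prime → F p ≠ 1 - (p : ℂ) ^ s)
    {x : ℕ} (hx : x ≠ 0) : HA s F x ≠ 0 := by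
  have hppne : ∀ p k : ℕ, p.Prime → 1 ≤ k → HA s F (p ^ k) ≠ 0 := by
    intro p k hp hk
    rw [HA_prime_pow hF1 hFstrong hp hk]
    have hp0 : (p : ℂ) ≠ 0 := Nat.cast_ne_zero.2 hp.ne_zero
    refine mul_ne_zero (pow_ne_zero _ hp0) fun h => hFp p hp ?_
    linear_combination h
  rw [(HA_mult hF1 hFmult).multiplicative_factorization _ hx, Finsupp.prod]
  refine Finset.prod_ne_zero_iff.2 fun p hp => ?_
  rw [Nat.support_factorization] at hp
  have hp' := Nat.prime_of_mem_primeFactors hp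
  exact hppne p _ hp'
    (Nat.Prime.factorization_pos_of_dvd hp' hx (Nat.dvd_of_mem_primeFactors hp))



section PartD

variable {s n : ℕ} {F : ℕ → ℂ}

/-- `h(e) = e^s` if `e^s ∣ n`, else `0`. -/
noncomputable def hfun (s n : ℕ) : ArithmeticFunction ℂ :=
  ⟨fun e => if e = 0 then 0 else if e ^ s ∣ n then ((e : ℂ)) ^ s else 0, by simp⟩

lemma hfun_apply {e : ℕ} (he : e ≠ 0) :
    hfun s n e = if e ^ s ∣ n then ((e : ℂ)) ^ s else 0 := if_neg he

lemma hfun_mult (s n : ℕ) : (hfun s n).IsMultiplicative := by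
  refine ⟨by simp [hfun], fun {a b} hab => ?_⟩
  rcases eq_or_ne a 0 with rfl | ha
  · obtain rfl : b = 1 := Nat.coprime_zero_left b |>.1 hab
    simp [hfun]
  rcases eq_or_ne b 0 with rfl | hb
  · obtain rfl : a = 1 := Nat.coprime_zero_right a |>.1 hab
    simp [hfun]
  rw [hfun_apply ha, hfun_apply hb, hfun_apply (mul_ne_zero ha hb)]
  have key : ((a * b) ^ s ∣ n) ↔ (a ^ s ∣ n ∧ b ^ s ∣ n) := by
    constructor
    · intro h
      exact ⟨(pow_dvd_pow_of_dvd (dvd_mul_right a b) s).trans h,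
             (pow_dvd_pow_of_dvd (dvd_mul_left b a) s).trans h⟩
    · rintro ⟨h1, h2⟩
      rw [mul_pow]
      exact Nat.Coprime.mul_dvd_of_dvd_of_dvd (Nat.Coprime.pow s s hab) h1 h2
  by_cases h1 : a ^ s ∣ n <;> by_cases h2 : b ^ s ∣ n
  · rw [if_pos (key.2 ⟨h1, h2⟩), if_pos h1, if_pos h2]
    push_cast
    ring
  · rw [if_neg (fun h => h2 (key.1 h).2), if_pos h1, if_neg h2, mul_zero]
  · rw [if_neg (fun h => h1 (key.1 h).1), if_neg h1, zero_mul]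
  · rw [if_neg (fun h => h1 (key.1 h).1), if_neg h1, zero_mul]

noncomputable def EA (s n : ℕ) (F : ℕ → ℂ) : ArithmeticFunction ℂ := hfun s n * gA F

lemma EA_mult (hF1 : F 1 = 1)
    (hFmult : ∀ a b : ℕ, Nat.Coprime a b → F (a * b) = F a * F b) :
    (EA s n F).IsMultiplicative :=
  (hfun_mult s n).mul (gA_mult hF1 hFmult)

noncomputable def RA (s n : ℕ) (F : ℕ → ℂ) : ArithmeticFunction ℂ :=
  ⟨fun r => if r = 0 then 0 else
      gA F (r / aa s n r) * HA s F r / HA s F (r / aa s n r), by simp⟩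

lemma RA_apply {r : ℕ} (hr : r ≠ 0) :
    RA s n F r = gA F (r / aa s n r) * HA s F r / HA s F (r / aa s n r) := if_neg hr

lemma aa_one : aa s n 1 = 1 := Nat.dvd_one.1 (aa_dvd one_ne_zero)

lemma RA_mult (hs : s ≠ 0) (hF1 : F 1 = 1)
    (hFmult : ∀ a b : ℕ, Nat.Coprime a b → F (a * b) = F a * F b) :
    (RA s n F).IsMultiplicative := by
  have hg := gA_mult hF1 hFmult
  have hH := HA_mult (s := s) hF1 hFmult
  constructor
  · rw [RA_apply one_ne_zero, aa_one, Nat.div_self one_pos, hg.1, hH.1]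
    norm_num
  · intro a b hab
    rcases eq_or_ne a 0 with rfl | ha
    · simp [RA]
    rcases eq_or_ne b 0 with rfl | hb
    · simp [RA]
    rw [RA_apply (mul_ne_zero ha hb), RA_apply ha, RA_apply hb,
      aa_mul hs ha hb hab,
      ← Nat.div_mul_div_comm (aa_dvd ha) (aa_dvd hb)]
    have hq : Nat.Coprime (a / aa s n a) (b / aa s n b) :=
      Nat.Coprime.coprime_dvd_left (Nat.div_dvd_of_dvd (aa_dvd ha))
        (Nat.Coprime.coprime_dvd_right (Nat.div_dvd_of_dvd (aa_dvd hb)) hab)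
    rw [hg.2 hq, hH.2 hab, hH.2 hq]
    ring

lemma EA_eq_RA_pp (hs : s ≠ 0) (hF1 : F 1 = 1)
    (hFmult : ∀ a b : ℕ, Nat.Coprime a b → F (a * b) = F a * F b)
    (hFstrong : ∀ p a : ℕ, p.Prime → 1 ≤ a → F (p ^ a) = F p)
    (hFp : ∀ p : ℕ, p.Prime → F p ≠ 1 - (p : ℂ) ^ s)
    {p : ℕ} (k : ℕ) (hp : p.Prime) : EA s n F (p ^ k) = RA s n F (p ^ k) := by
  have hg := gA_mult hF1 hFmult
  have hH := HA_mult (s := s) hF1 hFmult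
  have hpk : p ^ k ≠ 0 := pow_ne_zero _ hp.ne_zero
  rcases Nat.eq_zero_or_pos k with rfl | hk
  · rw [pow_zero, (EA_mult hF1 hFmult).1, (RA_mult hs hF1 hFmult).1]
  obtain ⟨α, hαk, hα⟩ : ∃ α ≤ k, aa s n (p ^ k) = p ^ α :=
    (Nat.dvd_prime_pow hp).1 (aa_dvd hpk)
  have hdiv : p ^ k / aa s n (p ^ k) = p ^ (k - α) := by
    rw [hα, Nat.pow_div hαk hp.pos]
  have hXne : (p : ℂ) ^ s - 1 + F p ≠ 0 := fun h => hFp p hp (by linear_combination h)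
  have hp0 : (p : ℂ) ≠ 0 := Nat.cast_ne_zero.2 hp.ne_zero
  -- hfun values
  have hhf : ∀ i ≤ k, hfun s n (p ^ i) =
      if i ≤ α then ((p : ℂ)) ^ (i * s) else 0 := by
    intro i hik
    rw [hfun_apply (pow_ne_zero _ hp.ne_zero)]
    have hcond : (p ^ i) ^ s ∣ n ↔ i ≤ α := by
      constructor
      · intro h
        have : p ^ i ∣ aa s n (p ^ k) := dvd_aa hpk (pow_dvd_pow p hik) h
        rw [hα] at this
        exact (Nat.pow_dvd_pow_iff_le_right hp.one_lt).1 this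
      · intro h
        have h1 : (p ^ i) ^ s ∣ (p ^ α) ^ s :=
          pow_dvd_pow_of_dvd (pow_dvd_pow p h) s
        exact h1.trans (hα ▸ aa_pow_dvd hpk)
    by_cases hiα : i ≤ α
    · rw [if_pos (hcond.2 hiα), if_pos hiα]
      push_cast
      rw [← pow_mul]
    · rw [if_neg (fun h => hiα (hcond.1 h)), if_neg hiα]
  have hEA : EA s n F (p ^ k) =
      ∑ i ∈ range (k + 1), (if i ≤ α then ((p : ℂ)) ^ (i * s) else 0) * gA F (p ^ (k - i)) := by
    rw [EA, pp_apply _ _ hp]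
    refine Finset.sum_congr rfl fun i hi => ?_
    rw [hhf i (by rw [mem_range] at hi; omega)]
  have hRA : RA s n F (p ^ k) =
      gA F (p ^ (k - α)) * HA s F (p ^ k) / HA s F (p ^ (k - α)) := by
    rw [RA_apply hpk, hdiv]
  rcases Nat.lt_trichotomy (k - α) 1 with hβ | hβ | hβ
  · -- β = 0, i.e. α = k
    have hαk' : α = k := by omega
    subst hαk'
    rw [hRA, Nat.sub_self, pow_zero, hg.1, hH.1, one_mul, div_one]
    rw [hEA, sum_range_succ]
    have hmain : ∑ i ∈ range α, (if i ≤ α then ((p : ℂ)) ^ (i * s) else 0) * gA F (p ^ (α - i))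
        = ((p : ℂ)) ^ ((α - 1) * s) * (F p - 1) := by
      rw [Finset.sum_eq_single_of_mem (α - 1) (by rw [mem_range]; omega)]
      · rw [if_pos (by omega), show α - (α - 1) = 1 by omega, pow_one, gA_prime hF1 hp]
      · intro i hi hine
        rw [mem_range] at hi
        rw [gA_prime_pow_eq_zero hFstrong hp (by omega), mul_zero]
    rw [hmain, if_pos le_rfl, Nat.sub_self, pow_zero, hg.1, mul_one,
      HA_prime_pow hF1 hFstrong hp hk]
    obtain ⟨k', rfl⟩ : ∃ k', α = k' + 1 := ⟨α - 1, by omega⟩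
    simp only [Nat.add_sub_cancel]
    rw [add_mul, one_mul, pow_add]
    ring
  · -- β = 1
    have hα1 : k = α + 1 := by omega
    rw [hRA, hβ, HA_prime_pow hF1 hFstrong hp hk,
      HA_prime_pow (k := 1) hF1 hFstrong hp le_rfl, pow_one, gA_prime hF1 hp]
    rw [hEA]
    have hmain : ∀ i ∈ range (k + 1), (if i ≤ α then ((p : ℂ)) ^ (i * s) else 0) * gA F (p ^ (k - i))
        = if i = α then ((p : ℂ)) ^ (α * s) * (F p - 1) else 0 := by
      intro i hi
      rw [mem_range] at hi
      rcases eq_or_ne i α with rfl | hiα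
      · rw [if_pos le_rfl, if_pos rfl, show k - i = 1 by omega, pow_one, gA_prime hF1 hp]
      · rw [if_neg hiα]
        by_cases hile : i ≤ α
        · rw [gA_prime_pow_eq_zero hFstrong hp (by omega), mul_zero]
        · rw [if_neg hile, zero_mul]
    rw [Finset.sum_congr rfl hmain, Finset.sum_ite_eq' (range (k + 1)) α, if_pos (by rw [mem_range]; omega)]
    rw [show k - 1 = α by omega]
    simp only [Nat.sub_self, zero_mul, pow_zero, one_mul]
    field_simp
  · -- β ≥ 2
    have hg0 : gA F (p ^ (k - α)) = 0 := gA_prime_pow_eq_zero hFstrong hp (by omega)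
    rw [hRA, hg0, zero_mul, zero_div, hEA]
    refine Finset.sum_eq_zero fun i hi => ?_
    rw [mem_range] at hi
    by_cases hile : i ≤ α
    · rw [gA_prime_pow_eq_zero hFstrong hp (by omega), mul_zero]
    · rw [if_neg hile, zero_mul]

lemma EA_eq_RA (hs : s ≠ 0) (hF1 : F 1 = 1)
    (hFmult : ∀ a b : ℕ, Nat.Coprime a b → F (a * b) = F a * F b)
    (hFstrong : ∀ p a : ℕ, p.Prime → 1 ≤ a → F (p ^ a) = F p)
    (hFp : ∀ p : ℕ, p.Prime → F p ≠ 1 - (p : ℂ) ^ s) :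
    EA s n F = RA s n F :=
  (ArithmeticFunction.IsMultiplicative.eq_iff_eq_on_prime_powers _ (EA_mult hF1 hFmult) _
    (RA_mult hs hF1 hFmult)).2 fun p i hp => EA_eq_RA_pp hs hF1 hFmult hFstrong hFp i hp

end PartD


lemma exp_sum_Icc (M n : ℕ) (hM : M ≠ 0) :
    ∑ j ∈ Icc 1 M, Complex.exp (-(2 * Real.pi * Complex.I * j * n / M))
      = if M ∣ n then ((M : ℕ) : ℂ) else 0 := by
  have hMc : (M : ℂ) ≠ 0 := Nat.cast_ne_zero.2 hM
  set z : ℂ := Complex.exp (-(2 * Real.pi * Complex.I * n / M)) with hz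
  have hpow : ∀ j : ℕ, Complex.exp (-(2 * Real.pi * Complex.I * j * n / M)) = z ^ j := by
    intro j
    rw [hz, ← Complex.exp_nat_mul]
    congr 1
    push_cast
    ring
  have htot : ∑ j ∈ Icc 1 M, Complex.exp (-(2 * Real.pi * Complex.I * j * n / M))
      = z * ∑ j ∈ range M, z ^ j := by
    rw [Finset.sum_congr rfl fun j _ => hpow j]
    rw [show Icc 1 M = Ico 1 (M + 1) by rfl, Finset.sum_Ico_eq_sum_range]
    simp only [Nat.add_sub_cancel]
    rw [Finset.mul_sum]
    exact Finset.sum_congr rfl fun j _ => by rw [pow_add, pow_one]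
  rw [htot]
  by_cases hdvd : M ∣ n
  · obtain ⟨c, rfl⟩ := hdvd
    have hz1 : z = 1 := by
      rw [hz, show -(2 * ↑Real.pi * Complex.I * (↑(M * c)) / ↑M) = ((-c : ℤ) : ℂ) * (2 * ↑Real.pi * Complex.I) by push_cast; field_simp,
        Complex.exp_int_mul_two_pi_mul_I]
    rw [if_pos ⟨c, rfl⟩, hz1]
    simp
  · have hz1 : z ≠ 1 := by
      intro h
      rw [hz, Complex.exp_eq_one_iff] at h
      obtain ⟨c, hc⟩ := h
      have h2 : (2 * (Real.pi : ℂ) * Complex.I) ≠ 0 := by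
        simp [Real.pi_ne_zero, Complex.I_ne_zero, Complex.ofReal_ne_zero]
      have hc' : (2 * (Real.pi : ℂ) * Complex.I) * (n : ℂ)
          = (2 * (Real.pi : ℂ) * Complex.I) * (((-c) * M : ℤ) : ℂ) := by
        field_simp at hc
        push_cast
        linear_combination (-(2 * (Real.pi : ℂ) * Complex.I)) * hc
      have hnn : (n : ℤ) = (-c) * M := by exact_mod_cast mul_left_cancel₀ h2 hc'
      exact hdvd (Int.natCast_dvd_natCast.1 ⟨-c, by rw [hnn]; ring⟩)
    have hzM : z ^ M = 1 := by
      rw [hz, ← Complex.exp_nat_mul,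
        show (M : ℂ) * -(2 * ↑Real.pi * Complex.I * ↑n / ↑M) = ((-n : ℤ) : ℂ) * (2 * ↑Real.pi * Complex.I) by push_cast; field_simp,
        Complex.exp_int_mul_two_pi_mul_I]
    rw [geom_sum_eq hz1, hzM, if_neg hdvd]
    simp


section PartE

variable {s n r : ℕ} {F : ℕ → ℂ}

noncomputable def FsA (s : ℕ) (F : ℕ → ℂ) : ArithmeticFunction ℂ :=
  ⟨fun l => if l = 0 then 0 else F (l ^ s), by simp⟩

lemma FsA_apply {l : ℕ} (hl : l ≠ 0) : FsA s F l = F (l ^ s) := if_neg hl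

lemma Fpow (hs : s ≠ 0) (hF1 : F 1 = 1)
    (hFmult : ∀ a b : ℕ, Nat.Coprime a b → F (a * b) = F a * F b)
    (hFstrong : ∀ p a : ℕ, p.Prime → 1 ≤ a → F (p ^ a) = F p)
    {l : ℕ} (hl : l ≠ 0) : F (l ^ s) = F l := by
  have hFsmult : (FsA s F).IsMultiplicative := by
    refine ⟨by simp [FsA, hF1], fun {a b} hab => ?_⟩
    rcases eq_or_ne a 0 with rfl | ha
    · obtain rfl : b = 1 := Nat.coprime_zero_left b |>.1 hab
      simp [FsA]
    rcases eq_or_ne b 0 with rfl | hb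
    · obtain rfl : a = 1 := Nat.coprime_zero_right a |>.1 hab
      simp [FsA]
    rw [FsA_apply (mul_ne_zero ha hb), FsA_apply ha, FsA_apply hb, mul_pow]
    exact hFmult _ _ (Nat.Coprime.pow s s hab)
  have heq : FsA s F = FA F := by
    refine (ArithmeticFunction.IsMultiplicative.eq_iff_eq_on_prime_powers _ hFsmult _
      (FA_mult hF1 hFmult)).2 fun p i hp => ?_
    have hpi : p ^ i ≠ 0 := pow_ne_zero _ hp.ne_zero
    rw [FsA_apply hpi, FA_apply F hpi]
    rcases Nat.eq_zero_or_pos i with rfl | hi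
    · simp
    · rw [← pow_mul, hFstrong p (i * s) hp (Nat.mul_pos hi (Nat.pos_of_ne_zero hs)), hFstrong p i hp hi]
  have := congrArg (fun f : ArithmeticFunction ℂ => f l) heq
  rwa [FsA_apply hl, FA_apply F hl] at this

lemma moebius_inv (F : ℕ → ℂ) (x : ℕ) :
    FA F x = ∑ d ∈ x.divisors, gA F d := by
  have h : gA F * (ArithmeticFunction.zeta : ArithmeticFunction ℂ) = FA F := by
    rw [gA, mul_assoc, coe_moebius_mul_coe_zeta, mul_one]
  conv_lhs => rw [← h]
  rw [coe_mul_zeta_apply]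

lemma divisors_aa (hr : r ≠ 0) :
    (aa s n r).divisors = r.divisors.filter (fun e => e ^ s ∣ n) := by
  ext d
  simp only [Nat.mem_divisors, Finset.mem_filter]
  constructor
  · rintro ⟨hd, _⟩
    obtain ⟨h1, h2⟩ := (dvd_aa_iff hr).1 hd
    exact ⟨⟨h1, hr⟩, h2⟩
  · rintro ⟨⟨h1, _⟩, h2⟩
    exact ⟨dvd_aa hr h1 h2, (aa_pos hr).ne'⟩

lemma inner_sum (hs : s ≠ 0) (hr : r ≠ 0) {d : ℕ} (hd : d ∣ r) (n : ℕ) :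
    ∑ k ∈ (Icc 1 (r ^ s)).filter (fun k => d ^ s ∣ k),
      Complex.exp (-(2 * Real.pi * Complex.I * k * n / (r ^ s)))
    = if (r / d) ^ s ∣ n then (((r / d) ^ s : ℕ) : ℂ) else 0 := by
  have hd0 : d ≠ 0 := fun h => hr (by simpa [h] using hd)
  have hrd0 : r / d ≠ 0 :=
    (Nat.div_pos (Nat.le_of_dvd (Nat.pos_of_ne_zero hr) hd) (Nat.pos_of_ne_zero hd0)).ne'
  have hD0 : d ^ s ≠ 0 := pow_ne_zero _ hd0
  have hM0 : (r / d) ^ s ≠ 0 := pow_ne_zero _ hrd0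
  have hDM : d ^ s * (r / d) ^ s = r ^ s := by rw [← mul_pow, Nat.mul_div_cancel' hd]
  have himg : (Icc 1 (r ^ s)).filter (fun k => d ^ s ∣ k)
      = (Icc 1 ((r / d) ^ s)).image (fun j => d ^ s * j) := by
    ext k
    simp only [mem_filter, mem_Icc, mem_image]
    constructor
    · rintro ⟨⟨h1, h2⟩, j, rfl⟩
      refine ⟨j, ⟨?_, ?_⟩, rfl⟩
      · rcases Nat.eq_zero_or_pos j with rfl | hj
        · simp at h1
        · exact hj
      · rw [← hDM] at h2
        exact Nat.le_of_mul_le_mul_left h2 (Nat.pos_of_ne_zero hD0)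
    · rintro ⟨j, ⟨hj1, hj2⟩, rfl⟩
      refine ⟨⟨?_, ?_⟩, dvd_mul_right _ _⟩
      · have : j ≠ 0 := by omega
        exact Nat.one_le_iff_ne_zero.2 (mul_ne_zero hD0 this)
      · rw [← hDM]
        exact Nat.mul_le_mul_left _ hj2
  rw [himg, Finset.sum_image
    (fun a _ b _ h => Nat.eq_of_mul_eq_mul_left (Nat.pos_of_ne_zero hD0) h)]
  have harg : ∀ j ∈ Icc 1 ((r / d) ^ s),
      Complex.exp (-(2 * Real.pi * Complex.I * ((d ^ s * j : ℕ) : ℂ) * n / ((r : ℂ) ^ s)))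
      = Complex.exp (-(2 * Real.pi * Complex.I * j * n / (((r / d) ^ s : ℕ) : ℂ))) := by
    intro j hj
    congr 1
    have hrs : ((r : ℂ)) ^ s = ((d ^ s : ℕ) : ℂ) * (((r / d) ^ s : ℕ) : ℂ) := by
      rw [← Nat.cast_mul, hDM, Nat.cast_pow]
    have h1 : ((d ^ s : ℕ) : ℂ) ≠ 0 := Nat.cast_ne_zero.2 hD0
    have h2 : (((r / d) ^ s : ℕ) : ℂ) ≠ 0 := Nat.cast_ne_zero.2 hM0
    rw [hrs]
    push_cast at h1 h2 ⊢
    field_simp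
  rw [Finset.sum_congr rfl harg, exp_sum_Icc _ n hM0]

lemma dirconv_eq (F G : ℕ → ℂ) (G' : ArithmeticFunction ℂ)
    (hG : ∀ x, x ≠ 0 → G' x = G x) (x : ℕ) (hx : x ≠ 0) :
    dirconv F G x = (FA F * G') x := by
  rw [dirconv, ArithmeticFunction.mul_apply,
    Nat.sum_divisorsAntidiagonal (f := fun a b => FA F a * G' b)]
  refine Finset.sum_congr rfl fun d hd => ?_
  obtain ⟨hdx, _⟩ := Nat.mem_divisors.1 hd
  have hd0 : d ≠ 0 := fun h => hx (by simpa [h] using hdx)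
  have hxd0 : x / d ≠ 0 :=
    (Nat.div_pos (Nat.le_of_dvd (Nat.pos_of_ne_zero hx) hdx) (Nat.pos_of_ne_zero hd0)).ne'
  rw [FA_apply F hd0, hG _ hxd0]

end PartE

end Stmt19Aux

open Stmt19Aux in
theorem stmt19 (s : ℕ) (hs : 0 < s) (F : ℕ → ℂ)
    (hF1 : F 1 = 1)
    (hFmult : ∀ a b : ℕ, Nat.Coprime a b → F (a * b) = F a * F b)
    (hFstrong : ∀ p a : ℕ, p.Prime → 1 ≤ a → F (p ^ a) = F p)
    (hFp : ∀ p : ℕ, p.Prime → F p ≠ 1 - (p : ℂ) ^ s)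
    (r n m : ℕ) (hr : 0 < r) (hn : 0 < n)
    (hm : m ^ s = r ^ s / ggcd s n (r ^ s)) :
    dft s r (fun k => F (ggcd s k (r ^ s))) n =
      dirconv F (fun k => ((ArithmeticFunction.moebius k : ℤ) : ℂ)) m *
        dirconv F (Js s) r / dirconv F (Js s) m := by
  classical
  have hs' : s ≠ 0 := hs.ne'
  have hr' : r ≠ 0 := hr.ne'
  have hn' : n ≠ 0 := hn.ne'
  have haar : aa s n r ∣ r := aa_dvd hr'
  have haa0 : aa s n r ≠ 0 := (aa_pos hr').ne'
  have hm' : m = r / aa s n r := by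
    apply Nat.pow_left_injective hs'
    show m ^ s = (r / aa s n r) ^ s
    rw [hm, ggcd_eq_aa_pow hs' hr', Nat.div_pow haar]
  have hm0 : m ≠ 0 := by
    rw [hm']
    exact (Nat.div_pos (Nat.le_of_dvd hr haar) (Nat.pos_of_ne_zero haa0)).ne'
  -- Step 1: the DFT equals `EA s n F r`.
  have hdft : dft s r (fun k => F (ggcd s k (r ^ s))) n = EA s n F r := by
    rw [dft]
    have hstep1 : ∀ k ∈ Icc 1 (r ^ s),
        F (ggcd s k (r ^ s)) * Complex.exp (-(2 * Real.pi * Complex.I * k * n / (r ^ s)))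
        = ∑ d ∈ r.divisors, (if d ^ s ∣ k then
            gA F d * Complex.exp (-(2 * Real.pi * Complex.I * k * n / (r ^ s))) else 0) := by
      intro k hk
      have hFg : F (ggcd s k (r ^ s)) = ∑ d ∈ r.divisors, (if d ^ s ∣ k then gA F d else 0) := by
        rw [ggcd_eq_aa_pow hs' hr', Fpow hs' hF1 hFmult hFstrong (aa_pos hr').ne',
          ← FA_apply F (aa_pos hr').ne', moebius_inv, divisors_aa hr', Finset.sum_filter]
      rw [hFg, Finset.sum_mul]
      refine Finset.sum_congr rfl fun d hd => ?_
      by_cases h : d ^ s ∣ k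
      · rw [if_pos h, if_pos h]
      · rw [if_neg h, if_neg h, zero_mul]
    rw [Finset.sum_congr rfl hstep1, Finset.sum_comm]
    have hstep2 : ∀ d ∈ r.divisors,
        (∑ k ∈ Icc 1 (r ^ s), if d ^ s ∣ k then
            gA F d * Complex.exp (-(2 * Real.pi * Complex.I * k * n / (r ^ s))) else 0)
        = hfun s n (r / d) * gA F d := by
      intro d hd
      obtain ⟨hdr, _⟩ := Nat.mem_divisors.1 hd
      have hrd0 : r / d ≠ 0 := by
        have hd0 : d ≠ 0 := fun h => hr' (by simpa [h] using hdr)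
        exact (Nat.div_pos (Nat.le_of_dvd hr hdr) (Nat.pos_of_ne_zero hd0)).ne'
      rw [← Finset.sum_filter, ← Finset.mul_sum, inner_sum hs' hr' hdr n,
        hfun_apply hrd0]
      by_cases h : (r / d) ^ s ∣ n
      · rw [if_pos h, if_pos h]
        push_cast
        ring
      · rw [if_neg h, if_neg h, mul_zero, zero_mul]
    rw [Finset.sum_congr rfl hstep2, EA, ArithmeticFunction.mul_apply,
      Nat.sum_divisorsAntidiagonal' (f := fun a b => hfun s n a * gA F b)]
  rw [hdft, EA_eq_RA hs' hF1 hFmult hFstrong hFp, RA_apply hr', ← hm']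
  have hdc1 : dirconv F (fun k => ((ArithmeticFunction.moebius k : ℤ) : ℂ)) m = gA F m := by
    rw [dirconv_eq F _ ((ArithmeticFunction.moebius : ArithmeticFunction ℤ) :
        ArithmeticFunction ℂ) (fun x _ => by rw [ArithmeticFunction.intCoe_apply]) m hm0]
    rfl
  have hdc2 : ∀ x : ℕ, x ≠ 0 → dirconv F (Js s) x = HA s F x := by
    intro x hx
    rw [dirconv_eq F (Js s) (JA s) (fun y hy => JA_apply hy) x hx]
    rfl
  rw [hdc1, hdc2 r hr', hdc2 m hm0]
end
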